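/- For every λ ∈ ℂ, det(λ·I_{3n} − A) = det( (λ−1)²·(λ−1+p)·Iₙ + ((λ−1)·κ₁ + p·(κ₁−κ₂))·τ·(L·R) ), where A, L and R are regarded as complex matrices. -/

import Mathlib

open Matrix Polynomial

/-- The 3n×3n transition matrix of the skewless clock-synchronization algorithm:
`A = [[Iₙ, τR, 0],[−κ₁L, Iₙ, −κ₂Iₙ],[−pL, 0, (1−p)Iₙ]]`. -/
noncomputable def Amat (n : ℕ) (τ κ₁ κ₂ p : ℝ) (L R : Matrix (Fin n) (Fin n) ℝ) :
    Matrix (Fin n ⊕ Fin n ⊕ Fin n) (Fin n ⊕ Fin n ⊕ Fin n) ℝ :=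
  Matrix.fromBlocks 1 (Matrix.fromCols (τ • R) 0)
    (Matrix.fromRows ((-κ₁) • L) ((-p) • L))
    (Matrix.fromBlocks 1 ((-κ₂) • (1 : Matrix (Fin n) (Fin n) ℝ)) 0
      ((1 - p) • (1 : Matrix (Fin n) (Fin n) ℝ)))

/-- For every `λ ∈ ℂ`,
`det(λ I₃ₙ − A) = det((λ−1)²(λ−1+p) Iₙ + ((λ−1)κ₁ + p(κ₁−κ₂)) τ (L R))`. -/
lemma det_smul_one_add_smul_mul_comm {n : ℕ} (α f : ℂ) (hα : α ≠ 0)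
    (X Y : Matrix (Fin n) (Fin n) ℂ) :
    (α • (1 : Matrix (Fin n) (Fin n) ℂ) + f • (X * Y)).det
      = (α • (1 : Matrix (Fin n) (Fin n) ℂ) + f • (Y * X)).det := by
  have h1 : α • (1 : Matrix (Fin n) (Fin n) ℂ) + f • (X * Y)
      = α • (1 + ((α⁻¹ * f) • X) * Y) := by
    rw [smul_add, Matrix.smul_mul, smul_smul]
    congr 2
    field_simp
  have h2 : α • (1 : Matrix (Fin n) (Fin n) ℂ) + f • (Y * X)
      = α • (1 + Y * ((α⁻¹ * f) • X)) := by
    rw [smul_add, Matrix.mul_smul, smul_smul]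
    congr 2
    field_simp
  rw [h1, h2, Matrix.det_smul, Matrix.det_smul, Matrix.det_one_add_mul_comm]

lemma stmt0_generic (n : ℕ) (τ κ₁ κ₂ p : ℝ)
    (L R : Matrix (Fin n) (Fin n) ℝ) (lam : ℂ)
    (ha : lam - 1 ≠ 0) (hb : lam - 1 + (p : ℂ) ≠ 0) :
    (lam • (1 : Matrix (Fin n ⊕ Fin n ⊕ Fin n) (Fin n ⊕ Fin n ⊕ Fin n) ℂ)
        - (Amat n τ κ₁ κ₂ p L R).map Complex.ofReal).det
      = (((lam - 1) ^ 2 * (lam - 1 + (p : ℂ))) • (1 : Matrix (Fin n) (Fin n) ℂ)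
        + (((lam - 1) * (κ₁ : ℂ) + (p : ℂ) * ((κ₁ : ℂ) - (κ₂ : ℂ))) * (τ : ℂ)) •
          ((L * R).map Complex.ofReal)).det := by
  set a : ℂ := lam - 1 with ha_def
  set b : ℂ := lam - 1 + (p : ℂ) with hb_def
  set L' : Matrix (Fin n) (Fin n) ℂ := L.map Complex.ofReal with hL'
  set R' : Matrix (Fin n) (Fin n) ℂ := R.map Complex.ofReal with hR'
  have hM : lam • (1 : Matrix (Fin n ⊕ Fin n ⊕ Fin n) (Fin n ⊕ Fin n ⊕ Fin n) ℂ)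
      - (Amat n τ κ₁ κ₂ p L R).map Complex.ofReal
      = fromBlocks (a • 1)
          (fromCols ((-(τ:ℂ)) • R') 0)
          (fromRows ((κ₁:ℂ) • L') ((p:ℂ) • L'))
          (fromBlocks (a • 1) ((κ₂:ℂ) • 1) 0 (b • 1)) := by
    ext i j
    rcases i with i | i | i <;> rcases j with j | j | j <;>
      simp [Amat, Matrix.one_apply, a, b, L', R', smul_eq_mul] <;>
      split_ifs <;> push_cast <;> first | ring | simp
  set D : Matrix (Fin n ⊕ Fin n) (Fin n ⊕ Fin n) ℂ :=
    fromBlocks (a • 1) ((κ₂:ℂ) • 1) 0 (b • 1) with hD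
  set Dinv : Matrix (Fin n ⊕ Fin n) (Fin n ⊕ Fin n) ℂ :=
    fromBlocks (a⁻¹ • 1) ((-(κ₂:ℂ) * a⁻¹ * b⁻¹) • 1) 0 (b⁻¹ • 1) with hDinv
  have c11 : (a • (1 : Matrix (Fin n) (Fin n) ℂ)) * (a⁻¹ • 1) + ((κ₂:ℂ) • 1) * 0 = 1 := by
    rw [Matrix.smul_mul, Matrix.mul_smul, smul_smul, Matrix.one_mul,
      mul_inv_cancel₀ ha, one_smul, Matrix.mul_zero, add_zero]
  have c12 : (a • (1 : Matrix (Fin n) (Fin n) ℂ)) * ((-(κ₂:ℂ) * a⁻¹ * b⁻¹) • 1)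
      + ((κ₂:ℂ) • 1) * (b⁻¹ • 1) = 0 := by
    rw [Matrix.smul_mul, Matrix.mul_smul, smul_smul, Matrix.one_mul,
      Matrix.smul_mul, Matrix.mul_smul, smul_smul, Matrix.one_mul, ← add_smul]
    have : a * (-(κ₂:ℂ) * a⁻¹ * b⁻¹) + (κ₂:ℂ) * b⁻¹ = 0 := by field_simp; ring
    rw [this, zero_smul]
  have c21 : (0 : Matrix (Fin n) (Fin n) ℂ) * (a⁻¹ • 1) + (b • 1) * 0 = 0 := by
    rw [Matrix.zero_mul, Matrix.mul_zero, add_zero]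
  have c22 : (0 : Matrix (Fin n) (Fin n) ℂ) * ((-(κ₂:ℂ) * a⁻¹ * b⁻¹) • 1)
      + (b • 1) * (b⁻¹ • 1) = 1 := by
    rw [Matrix.zero_mul, zero_add, Matrix.smul_mul, Matrix.mul_smul, smul_smul,
      Matrix.one_mul, mul_inv_cancel₀ hb, one_smul]
  have hDD : D * Dinv = 1 := by
    rw [hD, hDinv, fromBlocks_multiply, c11, c12, c21, c22, fromBlocks_one]
  letI : Invertible D := invertibleOfRightInverse _ _ hDD
  have hIO : ⅟D = Dinv := rfl
  rw [hM, Matrix.det_fromBlocks₂₂, hIO]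
  have hdetD : D.det = a ^ n * b ^ n := by
    rw [hD, Matrix.det_fromBlocks_zero₂₁, Matrix.det_smul, Matrix.det_smul,
      Matrix.det_one, Fintype.card_fin, mul_one, mul_one]
  set e : ℂ := -(τ:ℂ) * (κ₁:ℂ) * a⁻¹ + (τ:ℂ) * (κ₂:ℂ) * (p:ℂ) * a⁻¹ * b⁻¹ with he
  have hSchur : (fromCols ((-(τ:ℂ)) • R') 0 : Matrix (Fin n) (Fin n ⊕ Fin n) ℂ) * Dinv * fromRows ((κ₁:ℂ) • L') ((p:ℂ) • L')
      = e • (R' * L') := by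
    rw [hDinv, fromCols_mul_fromBlocks, fromCols_mul_fromRows]
    simp only [Matrix.zero_mul, Matrix.mul_zero, add_zero, zero_add,
      Matrix.smul_mul, Matrix.mul_smul, smul_smul, Matrix.mul_one, Matrix.one_mul,
      smul_zero, Matrix.zero_mul]
    rw [← add_smul]
    congr 1
    rw [he]
    ring
  rw [hSchur, hdetD]
  have hab : a * b ≠ 0 := mul_ne_zero ha hb
  have step1 : a ^ n * b ^ n * ((a • 1 : Matrix (Fin n) (Fin n) ℂ) - e • (R' * L')).det
      = ((a * b) • ((a • 1 : Matrix (Fin n) (Fin n) ℂ) - e • (R' * L'))).det := by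
    rw [Matrix.det_smul, Fintype.card_fin, mul_pow]
  rw [step1]
  have hba : b = a + (p:ℂ) := by rw [hb_def, ha_def]
  have step2 : (a * b) • ((a • 1 : Matrix (Fin n) (Fin n) ℂ) - e • (R' * L'))
      = (a ^ 2 * b) • (1 : Matrix (Fin n) (Fin n) ℂ)
        + ((a * (κ₁:ℂ) + (p:ℂ) * ((κ₁:ℂ) - (κ₂:ℂ))) * (τ:ℂ)) • (R' * L') := by
    have hcoef : -(a * b * e) = (a * (κ₁:ℂ) + (p:ℂ) * ((κ₁:ℂ) - (κ₂:ℂ))) * (τ:ℂ) := by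
      have h1 : -(a * b * e) = (τ:ℂ) * (κ₁:ℂ) * b - (τ:ℂ) * (κ₂:ℂ) * (p:ℂ) := by
        rw [he]; field_simp; ring
      rw [h1, hba]; ring
    have h2 : a * b * a = a ^ 2 * b := by ring
    rw [smul_sub, smul_smul, smul_smul, sub_eq_add_neg, ← neg_smul, hcoef, h2]
  rw [step2]
  have h3 := det_smul_one_add_smul_mul_comm (a ^ 2 * b)
    ((a * (κ₁:ℂ) + (p:ℂ) * ((κ₁:ℂ) - (κ₂:ℂ))) * (τ:ℂ))
    (mul_ne_zero (pow_ne_zero 2 ha) hb) R' L'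
  rw [h3]
  have hLR : (L * R).map Complex.ofReal = L' * R' :=
    Matrix.map_mul (f := Complex.ofRealHom)
  rw [hLR]

theorem stmt0 (n : ℕ) (hn : 1 ≤ n) (τ κ₁ κ₂ p : ℝ)
    (L : Matrix (Fin n) (Fin n) ℝ) (r : Fin n → ℝ)
    (R : Matrix (Fin n) (Fin n) ℝ) (hR : R = Matrix.diagonal r)
    (lam : ℂ) :
    (lam • (1 : Matrix (Fin n ⊕ Fin n ⊕ Fin n) (Fin n ⊕ Fin n ⊕ Fin n) ℂ)
        - (Amat n τ κ₁ κ₂ p L R).map Complex.ofReal).det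
      = (((lam - 1) ^ 2 * (lam - 1 + (p : ℂ))) • (1 : Matrix (Fin n) (Fin n) ℂ)
        + (((lam - 1) * (κ₁ : ℂ) + (p : ℂ) * ((κ₁ : ℂ) - (κ₂ : ℂ))) * (τ : ℂ)) •
          ((L * R).map Complex.ofReal)).det := by
  set F : ℂ → ℂ := fun z =>
    (z • (1 : Matrix (Fin n ⊕ Fin n ⊕ Fin n) (Fin n ⊕ Fin n ⊕ Fin n) ℂ)
        - (Amat n τ κ₁ κ₂ p L R).map Complex.ofReal).det with hF_def
  set G : ℂ → ℂ := fun z =>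
    (((z - 1) ^ 2 * (z - 1 + (p : ℂ))) • (1 : Matrix (Fin n) (Fin n) ℂ)
        + (((z - 1) * (κ₁ : ℂ) + (p : ℂ) * ((κ₁ : ℂ) - (κ₂ : ℂ))) * (τ : ℂ)) •
          ((L * R).map Complex.ofReal)).det with hG_def
  have hF : Continuous F :=
    Continuous.matrix_det ((continuous_id.smul continuous_const).sub continuous_const)
  have hG : Continuous G := by
    apply Continuous.matrix_det
    apply Continuous.add
    · exact (((continuous_id.sub continuous_const).pow 2).mul
        ((continuous_id.sub continuous_const).add continuous_const)).smul continuous_const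
    · exact ((((continuous_id.sub continuous_const).mul continuous_const).add
        continuous_const).mul continuous_const).smul continuous_const
  have hdense : Dense (({(1 : ℂ), 1 - (p:ℂ)} : Set ℂ)ᶜ) :=
    Set.Countable.dense_compl ℂ ((Set.finite_singleton _).insert _).countable
  have hEq : Set.EqOn F G (({(1 : ℂ), 1 - (p:ℂ)} : Set ℂ)ᶜ) := by
    intro z hz
    simp only [Set.mem_compl_iff, Set.mem_insert_iff, Set.mem_singleton_iff, not_or] at hz
    have ha : z - 1 ≠ 0 := sub_ne_zero.mpr hz.1
    have hb : z - 1 + (p:ℂ) ≠ 0 := by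
      intro h
      exact hz.2 (by linear_combination h)
    exact stmt0_generic n τ κ₁ κ₂ p L R z ha hb
  exact congrFun (Continuous.ext_on hdense hF hG hEq) lam
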